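/- Let K be a field, I an ideal of K[x_1,…,x_n], and G a Gröbner basis of I with respect to a fixed monomial order. Then for any polynomial f, f ∈ I if and only if the remainder of f upon multivariate division by G is zero. -/

import Mathlib

open MvPolynomial

/-- The leading exponent (exponent vector of the leading monomial) of a
multivariate polynomial with respect to a monomial order. -/
noncomputable def leadExp {n : ℕ} (m : MonomialOrder (Fin n)) {K : Type*} [Field K]
    (f : MvPolynomial (Fin n) K) : Fin n →₀ ℕ :=
  m.toSyn.symm (f.support.sup fun c => m.toSyn c)

/-- `r` is a remainder of `f` upon multivariate division by `G`:
`f - r` lies in the ideal generated by `G` and no monomial in the support of `r`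
is divisible by the leading monomial of any element of `G`. -/
def IsRemainder {n : ℕ} (m : MonomialOrder (Fin n)) {K : Type*} [Field K]
    (G : Finset (MvPolynomial (Fin n) K)) (f r : MvPolynomial (Fin n) K) : Prop :=
  f - r ∈ Ideal.span (G : Set (MvPolynomial (Fin n) K)) ∧
    ∀ c ∈ r.support, ∀ g ∈ G, ¬ leadExp m g ≤ c

section aux

variable {n : ℕ} (m : MonomialOrder (Fin n)) {K : Type*} [Field K]

lemma le_leadExp {f : MvPolynomial (Fin n) K} {c : Fin n →₀ ℕ} (hc : c ∈ f.support) :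
    m.toSyn c ≤ m.toSyn (leadExp m f) := by
  rw [leadExp, AddEquiv.apply_symm_apply]
  exact Finset.le_sup (f := fun c => m.toSyn c) hc

lemma leadExp_mem {f : MvPolynomial (Fin n) K} (hf : f ≠ 0) :
    leadExp m f ∈ f.support := by
  have hne : f.support.Nonempty := MvPolynomial.support_nonempty.mpr hf
  obtain ⟨c, hc, hceq⟩ := Finset.exists_mem_eq_sup f.support hne (fun c => m.toSyn c)
  have : leadExp m f = c := by rw [leadExp, hceq, AddEquiv.symm_apply_apply]
  rwa [this]

lemma coeff_leadExp_ne_zero {f : MvPolynomial (Fin n) K} (hf : f ≠ 0) :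
    coeff (leadExp m f) f ≠ 0 :=
  mem_support_iff.mp (leadExp_mem m hf)

/-- decrease lemma -/
lemma leadExp_lt {f f' : MvPolynomial (Fin n) K}
    (h0 : coeff (leadExp m f) f' = 0)
    (hsupp : ∀ e ∈ f'.support, m.toSyn e ≤ m.toSyn (leadExp m f)) (hf' : f' ≠ 0) :
    m.toSyn (leadExp m f') < m.toSyn (leadExp m f) := by
  have hm := leadExp_mem m hf'
  refine lt_of_le_of_ne (hsupp _ hm) (fun h => ?_)
  have : leadExp m f' = leadExp m f := m.toSyn.injective h
  rw [this] at hm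
  exact mem_support_iff.mp hm h0

lemma exists_remainder (G : Finset (MvPolynomial (Fin n) K))
    (hG0 : (0 : MvPolynomial (Fin n) K) ∉ G) (f : MvPolynomial (Fin n) K) :
    ∃ r, IsRemainder m G f r := by
  have H : ∀ (d : m.syn), ∀ f : MvPolynomial (Fin n) K, m.toSyn (leadExp m f) = d →
      ∃ r, IsRemainder m G f r := by
    classical
    intro d
    induction d using WellFoundedLT.induction with
    | ind d IH =>
      intro f hfd
      by_cases hf : f = 0
      · exact ⟨0, by simp [IsRemainder, hf, Ideal.zero_mem]⟩
      set dE := leadExp m f with hdE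
      have hc : coeff dE f ≠ 0 := coeff_leadExp_ne_zero m hf
      by_cases hdiv : ∃ g ∈ G, leadExp m g ≤ dE
      · obtain ⟨g, hgG, hgle⟩ := hdiv
        have hgne : g ≠ 0 := fun h => hG0 (h ▸ hgG)
        set dg := leadExp m g with hdg
        set q : MvPolynomial (Fin n) K :=
          monomial (dE - dg) (coeff dE f / coeff dg g) with hq
        set f' := f - q * g with hf'
        -- coefficient at dE vanishes
        have hcoe : coeff dE f' = 0 := by
          rw [hf', coeff_sub, hq, coeff_monomial_mul', if_pos tsub_le_self,
            tsub_tsub_cancel_of_le hgle,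
            div_mul_cancel₀ _ (coeff_leadExp_ne_zero m hgne), sub_self]
        have hsupp : ∀ e ∈ f'.support, m.toSyn e ≤ m.toSyn dE := by
          intro e he
          rw [mem_support_iff, hf', coeff_sub] at he
          by_cases hef : coeff e f ≠ 0
          · exact le_leadExp m (mem_support_iff.mpr hef)
          · push_neg at hef
            rw [hef, zero_sub, neg_ne_zero, hq, coeff_monomial_mul'] at he
            split_ifs at he with hle
            · have h2 : coeff (e - (dE - dg)) g ≠ 0 := right_ne_zero_of_mul he
              have h3 : m.toSyn (e - (dE - dg)) ≤ m.toSyn dg :=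
                le_leadExp m (mem_support_iff.mpr h2)
              have he' : e = (dE - dg) + (e - (dE - dg)) := (add_tsub_cancel_of_le hle).symm
              calc m.toSyn e = m.toSyn (dE - dg) + m.toSyn (e - (dE - dg)) := by
                    conv_lhs => rw [he']
                    rw [map_add]
                _ ≤ m.toSyn (dE - dg) + m.toSyn dg := by gcongr
                _ = m.toSyn ((dE - dg) + dg) := by rw [map_add]
                _ = m.toSyn dE := by rw [tsub_add_cancel_of_le hgle]
            · exact absurd rfl he
        have hrem : ∃ r, IsRemainder m G f' r := by
          by_cases hf'0 : f' = 0
          · exact ⟨0, by simp [IsRemainder, hf'0]⟩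
          · exact IH _ (hfd ▸ leadExp_lt m hcoe hsupp hf'0) f' rfl
        obtain ⟨r, hr1, hr2⟩ := hrem
        refine ⟨r, ?_, hr2⟩
        have heq : f - r = q * g + (f' - r) := by rw [hf']; ring
        rw [heq]
        exact Ideal.add_mem _ (Ideal.mul_mem_left _ _ (Ideal.subset_span hgG)) hr1
      · push_neg at hdiv
        set f' := f - monomial dE (coeff dE f) with hf'
        have hcoe : coeff dE f' = 0 := by
          simp [hf', coeff_sub, coeff_monomial]
        have hsupp : ∀ e ∈ f'.support, m.toSyn e ≤ m.toSyn dE := by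
          intro e he
          rw [mem_support_iff, hf', coeff_sub] at he
          by_cases hef : coeff e f ≠ 0
          · exact le_leadExp m (mem_support_iff.mpr hef)
          · push_neg at hef
            rw [hef, zero_sub, neg_ne_zero, coeff_monomial] at he
            split_ifs at he with hee
            · rw [hee]
            · exact absurd rfl he
        have hrem : ∃ r, IsRemainder m G f' r := by
          by_cases hf'0 : f' = 0
          · exact ⟨0, by simp [IsRemainder, hf'0]⟩
          · exact IH _ (hfd ▸ leadExp_lt m hcoe hsupp hf'0) f' rfl
        obtain ⟨r, hr1, hr2⟩ := hrem
        refine ⟨r + monomial dE (coeff dE f), ?_, ?_⟩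
        · have heq : f - (r + monomial dE (coeff dE f)) = f' - r := by rw [hf']; ring
          rw [heq]; exact hr1
        · intro c hcsup g hgG hgle
          have : c ∈ r.support ∪ (monomial dE (coeff dE f)).support :=
            Finsupp.support_add hcsup
          rcases Finset.mem_union.mp this with h | h
          · exact hr2 c h g hgG hgle
          · rw [support_monomial, if_neg hc] at h
            rw [Finset.mem_singleton.mp h] at hgle
            exact hdiv g hgG hgle
  exact H _ f rfl

end aux

/-- Ideal membership via Gröbner bases: the division process produces a remainder,
and `f ∈ I` iff any remainder of `f` on division by the Gröbner basis `G` is zero. -/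
theorem stmt_4 {n : ℕ} (m : MonomialOrder (Fin n)) {K : Type*} [Field K]
    (I : Ideal (MvPolynomial (Fin n) K)) (G : Finset (MvPolynomial (Fin n) K))
    (hGI : (G : Set (MvPolynomial (Fin n) K)) ⊆ I)
    (hG0 : (0 : MvPolynomial (Fin n) K) ∉ G)
    (hGB : ∀ f ∈ I, f ≠ 0 → ∃ g ∈ G, leadExp m g ≤ leadExp m f) :
    ∀ f : MvPolynomial (Fin n) K,
      (∃ r, IsRemainder m G f r) ∧
      ∀ r, IsRemainder m G f r → (f ∈ I ↔ r = 0) := by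
  have hspan : Ideal.span (G : Set (MvPolynomial (Fin n) K)) ≤ I := Ideal.span_le.mpr hGI
  intro f
  refine ⟨exists_remainder m G hG0 f, fun r hr => ?_⟩
  constructor
  · intro hfI
    by_contra hrne
    have hrI : r ∈ I := by
      have := I.sub_mem hfI (hspan hr.1)
      simpa using this
    obtain ⟨g, hgG, hgle⟩ := hGB r hrI hrne
    exact hr.2 _ (leadExp_mem m hrne) g hgG hgle
  · rintro rfl
    have := hspan hr.1
    simpa using this
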